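/- For integers d ≥ 1 and 0 ≤ q < d, the constant term of the Laurent expansion at t = 1 of the rational function (1/d) · Σ_{α^d = 1} α^{-q}/(1 - α t) equals (d - 1 - 2q)/(2d). -/

import Mathlib

open BigOperators Filter Polynomial Finset

lemma sum_pow_nthRootsC (d m : ℕ) (hd : 1 ≤ d) :
    ∑ α ∈ nthRootsFinset d (1 : ℂ), α ^ m = if d ∣ m then (d : ℂ) else 0 := by
  have hd0 : d ≠ 0 := by omega
  have : NeZero d := ⟨hd0⟩
  obtain ⟨ζ, hζ⟩ : ∃ ζ : ℂ, IsPrimitiveRoot ζ d := ⟨_, Complex.isPrimitiveRoot_exp d hd0⟩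
  by_cases hdvd : d ∣ m
  · rw [if_pos hdvd]
    obtain ⟨k, rfl⟩ := hdvd
    rw [Finset.sum_congr rfl (fun α hα => by
      rw [pow_mul, (Polynomial.mem_nthRootsFinset (by omega) (1 : ℂ)).1 hα, one_pow])]
    simp [hζ.card_nthRootsFinset]
  · rw [if_neg hdvd]
    have key : ∑ i ∈ Finset.range d, ((ζ ^ i) ^ m) = ∑ α ∈ nthRootsFinset d (1 : ℂ), α ^ m := by
      refine Finset.sum_bij (fun i _ => ζ ^ i) ?_ ?_ ?_ ?_
      · intro i _
        exact (Polynomial.mem_nthRootsFinset (by omega) (1 : ℂ)).2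
          (by rw [← pow_mul, mul_comm, pow_mul, hζ.pow_eq_one, one_pow])
      · intro i hi j hj hij
        exact hζ.pow_inj (Finset.mem_range.1 hi) (Finset.mem_range.1 hj) hij
      · intro α hα
        obtain ⟨i, hi, hiα⟩ := hζ.eq_pow_of_pow_eq_one
          ((Polynomial.mem_nthRootsFinset (by omega) (1 : ℂ)).1 hα)
        exact ⟨i, Finset.mem_range.2 hi, hiα⟩
      · intro i _; rfl
    rw [← key]
    have hx1 : ζ ^ m ≠ 1 := fun h => hdvd ((hζ.pow_eq_one_iff_dvd m).1 h)
    have hxd : (ζ ^ m) ^ d = 1 := by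
      rw [← pow_mul, mul_comm, pow_mul, hζ.pow_eq_one, one_pow]
    have hgs := geom_sum_mul (ζ ^ m) d
    rw [hxd, sub_self] at hgs
    have h2 : ζ ^ m - 1 ≠ 0 := sub_ne_zero.2 hx1
    have hz := (mul_eq_zero.1 hgs).resolve_right h2
    calc ∑ i ∈ Finset.range d, (ζ ^ i) ^ m
        = ∑ i ∈ Finset.range d, (ζ ^ m) ^ i := by
          refine Finset.sum_congr rfl fun i _ => ?_
          rw [← pow_mul, ← pow_mul, mul_comm]
      _ = 0 := hz

lemma key_identity (d q : ℕ) (hd : 1 ≤ d) (hq : q < d) :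
    ∑ α ∈ (nthRootsFinset d (1 : ℂ)).erase 1, α⁻¹ ^ q / (1 - α) = ((d : ℂ) - 1 - 2 * q) / 2 := by
  set T := (nthRootsFinset d (1 : ℂ)).erase 1 with hT
  have hmem : ∀ α ∈ T, α ≠ 1 ∧ α ^ d = 1 ∧ α ≠ 0 := by
    intro α hα
    have h1 := Finset.ne_of_mem_erase hα
    have h2 := (Polynomial.mem_nthRootsFinset (by omega) (1 : ℂ)).1 (Finset.mem_of_mem_erase hα)
    exact ⟨h1, h2, fun h0 => by simp [h0, zero_pow (show d ≠ 0 by omega)] at h2⟩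
  have hinvT : ∀ α ∈ T, α⁻¹ ∈ T := by
    intro α hα
    obtain ⟨h1, h2, h0⟩ := hmem α hα
    refine Finset.mem_erase.2 ⟨?_, (Polynomial.mem_nthRootsFinset (by omega) (1 : ℂ)).2 ?_⟩
    · rw [ne_eq, inv_eq_one]; exact h1
    · rw [inv_pow, h2, inv_one]
  -- pairing identity
  have pair : ∀ α ∈ T, α⁻¹ ^ q / (1 - α) + (α⁻¹)⁻¹ ^ q / (1 - α⁻¹)
      = ∑ j ∈ Finset.range (2 * q + 1), α ^ (d - q + j) := by
    intro α hα
    obtain ⟨h1, h2, h0⟩ := hmem α hα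
    have hinvq : α⁻¹ ^ q = α ^ (d - q) := by
      rw [inv_pow]
      refine inv_eq_of_mul_eq_one_left ?_
      rw [← pow_add, show d - q + q = d by omega, h2]
    have hsub1 : (1 : ℂ) - α ≠ 0 := sub_ne_zero.2 (Ne.symm h1)
    have hsub2 : (1 : ℂ) - α⁻¹ ≠ 0 := by
      rw [sub_ne_zero]; intro h; exact h1 (by rw [← inv_inv α, ← h, inv_one])
    have hsub1' : α - 1 ≠ 0 := sub_ne_zero.2 h1
    have hterm2 : (α⁻¹)⁻¹ ^ q / (1 - α⁻¹) = -α ^ (q + 1) / (1 - α) := by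
      rw [inv_inv, div_eq_div_iff hsub2 hsub1]
      field_simp
      ring
    have hp : α ^ (d - q) * α ^ (2 * q + 1) = α ^ (q + 1) := by
      rw [← pow_add, show d - q + (2 * q + 1) = d + (q + 1) by omega, pow_add, h2, one_mul]
    have hrhs : ∑ j ∈ Finset.range (2 * q + 1), α ^ (d - q + j)
        = α ^ (d - q) * ∑ j ∈ Finset.range (2 * q + 1), α ^ j := by
      rw [Finset.mul_sum]; exact Finset.sum_congr rfl fun j _ => by rw [pow_add]
    rw [hinvq, hterm2, ← add_div, hrhs, geom_sum_eq h1 (2 * q + 1),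
      ← mul_div_assoc, div_eq_div_iff hsub1 hsub1']
    linear_combination (α - 1) * hp
  -- the doubling argument
  have hreindex : ∑ α ∈ T, α⁻¹ ^ q / (1 - α)
      = ∑ α ∈ T, (α⁻¹)⁻¹ ^ q / (1 - α⁻¹) := by
    refine Finset.sum_nbij' (fun α => α⁻¹) (fun α => α⁻¹) hinvT hinvT
      (fun a _ => inv_inv a) (fun a _ => inv_inv a) ?_
    intro a _
    rw [inv_inv, inv_inv]
  have htwo : (2 : ℂ) * ∑ α ∈ T, α⁻¹ ^ q / (1 - α) = (d : ℂ) - 1 - 2 * q := by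
    have : (2 : ℂ) * ∑ α ∈ T, α⁻¹ ^ q / (1 - α)
        = ∑ α ∈ T, (α⁻¹ ^ q / (1 - α) + (α⁻¹)⁻¹ ^ q / (1 - α⁻¹)) := by
      rw [Finset.sum_add_distrib, ← hreindex]; ring
    rw [this, Finset.sum_congr rfl pair, Finset.sum_comm]
    have h1S : (1 : ℂ) ∈ nthRootsFinset d (1 : ℂ) :=
      (Polynomial.mem_nthRootsFinset (by omega) (1 : ℂ)).2 (one_pow d)
    have hinner : ∀ j ∈ Finset.range (2 * q + 1),
        ∑ α ∈ T, α ^ (d - q + j) = (if j = q then (d : ℂ) else 0) - 1 := by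
      intro j hj
      rw [hT, Finset.sum_erase_eq_sub h1S, sum_pow_nthRootsC d _ hd, one_pow]
      have hiff : d ∣ (d - q + j) ↔ j = q := by
        constructor
        · intro hdvd
          obtain ⟨k, hk⟩ := hdvd
          have hj' := Finset.mem_range.1 hj
          have hk2 : k < 2 := by
            by_contra h
            push_neg at h
            have : d * 2 ≤ d * k := Nat.mul_le_mul_left d h
            omega
          interval_cases k <;> omega
        · intro h; exact ⟨1, by omega⟩
      by_cases h : j = q
      · rw [if_pos h, if_pos (hiff.2 h)]
      · rw [if_neg h, if_neg (fun hh => h (hiff.1 hh))]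
    rw [Finset.sum_congr rfl hinner, Finset.sum_sub_distrib,
      Finset.sum_ite_eq' (Finset.range (2 * q + 1)) q (fun _ => (d : ℂ)),
      if_pos (Finset.mem_range.2 (by omega))]
    simp
    ring
  rw [eq_div_iff (two_ne_zero (α := ℂ))]
  linear_combination htwo

theorem stmt1 (d q : ℕ) (hd : 1 ≤ d) (hq : q < d) :
    ∃ c : ℂ, Filter.Tendsto
      (fun t : ℂ =>
        (1 / (d : ℂ)) * ∑ α ∈ (Polynomial.nthRoots d (1 : ℂ)).toFinset,
            α⁻¹ ^ q / (1 - α * t)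
          - c / (1 - t))
      (nhdsWithin 1 {(1 : ℂ)}ᶜ)
      (nhds (((d : ℂ) - 1 - 2 * q) / (2 * d))) := by
  refine ⟨1 / d, ?_⟩
  have hdC : (d : ℂ) ≠ 0 := Nat.cast_ne_zero.2 (by omega)
  set T := (nthRootsFinset d (1 : ℂ)).erase 1 with hT
  have hS : (Polynomial.nthRoots d (1 : ℂ)).toFinset = nthRootsFinset d (1 : ℂ) :=
    (Polynomial.nthRootsFinset_def d (1 : ℂ)).symm
  have h1S : (1 : ℂ) ∈ nthRootsFinset d (1 : ℂ) :=
    (Polynomial.mem_nthRootsFinset (by omega) (1 : ℂ)).2 (one_pow d)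
  have hfun : ∀ t : ℂ,
      (1 / (d : ℂ)) * ∑ α ∈ (Polynomial.nthRoots d (1 : ℂ)).toFinset,
          α⁻¹ ^ q / (1 - α * t) - (1 / (d : ℂ)) / (1 - t)
      = (1 / (d : ℂ)) * ∑ α ∈ T, α⁻¹ ^ q / (1 - α * t) := by
    intro t
    rw [hS, ← Finset.add_sum_erase _ _ h1S]
    simp only [inv_one, one_pow, one_mul]
    ring
  have hmemT : ∀ α ∈ T, (1 : ℂ) - α * 1 ≠ 0 := by
    intro α hα
    rw [mul_one, sub_ne_zero]
    exact fun h => Finset.ne_of_mem_erase hα h.symm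
  have htend : Tendsto (fun t : ℂ => (1 / (d : ℂ)) * ∑ α ∈ T, α⁻¹ ^ q / (1 - α * t))
      (nhds 1) (nhds ((1 / (d : ℂ)) * ∑ α ∈ T, α⁻¹ ^ q / (1 - α * 1))) := by
    refine tendsto_const_nhds.mul ?_
    refine tendsto_finset_sum _ fun α hα => ?_
    exact Tendsto.div tendsto_const_nhds
      ((continuous_const.sub (continuous_const.mul continuous_id)).tendsto 1) (hmemT α hα)
  have hval : (1 / (d : ℂ)) * ∑ α ∈ T, α⁻¹ ^ q / (1 - α * 1)
      = ((d : ℂ) - 1 - 2 * q) / (2 * d) := by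
    have : ∑ α ∈ T, α⁻¹ ^ q / (1 - α * 1) = ∑ α ∈ T, α⁻¹ ^ q / (1 - α) := by
      exact Finset.sum_congr rfl fun α _ => by rw [mul_one]
    rw [this, hT, key_identity d q hd hq, div_mul_eq_mul_div, one_mul, div_div]
  rw [← hval]
  exact (tendsto_nhdsWithin_of_tendsto_nhds htend).congr fun t => (hfun t).symm
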